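/- If G is a finite simple 2-connected chordal graph, then the Radon number of G with respect to Δ-convexity satisfies r_Δ(G) = max{2, α(G)}. -/

import Mathlib

variable {V : Type*}

/-- A set `S` is Δ-convex in `G` if every vertex adjacent to two adjacent vertices of `S`
belongs to `S`. -/
def DeltaConvex (G : SimpleGraph V) (S : Set V) : Prop :=
  ∀ ⦃u v w : V⦄, u ∈ S → v ∈ S → G.Adj u v → G.Adj w u → G.Adj w v → w ∈ S

/-- The Δ-convex hull of `S`: the smallest Δ-convex set containing `S`. -/
def deltaHull (G : SimpleGraph V) (S : Set V) : Set V :=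
  ⋂₀ {T : Set V | S ⊆ T ∧ DeltaConvex G T}

/-- `S` is Helly independent: the intersection of the hulls of the sets `S \ {a}`, `a ∈ S`,
is empty. -/
def HellyIndep (G : SimpleGraph V) (S : Set V) : Prop :=
  (⋂ a ∈ S, deltaHull G (S \ {a})) = ∅

/-- The Helly number of `G` w.r.t. Δ-convexity: the maximum cardinality of a Helly
independent subset of the vertex set. -/
noncomputable def hellyNumber (G : SimpleGraph V) : ℕ :=
  sSup {n : ℕ | ∃ S : Set V, HellyIndep G S ∧ S.ncard = n}

/-- `S` is Radon independent: no partition of `S` into two nonempty disjoint parts has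
intersecting hulls. -/
def RadonIndep (G : SimpleGraph V) (S : Set V) : Prop :=
  ¬ ∃ S₁ S₂ : Set V, S₁ ∪ S₂ = S ∧ Disjoint S₁ S₂ ∧ S₁.Nonempty ∧ S₂.Nonempty ∧
    (deltaHull G S₁ ∩ deltaHull G S₂).Nonempty

/-- The Radon number of `G` w.r.t. Δ-convexity. -/
noncomputable def radonNumber (G : SimpleGraph V) : ℕ :=
  sSup {n : ℕ | ∃ S : Set V, RadonIndep G S ∧ S.ncard = n}

/-- `S` is convexly independent: `a ∉ ⟨S \ {a}⟩` for every `a ∈ S`. -/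
def ConvIndep (G : SimpleGraph V) (S : Set V) : Prop :=
  ∀ a ∈ S, a ∉ deltaHull G (S \ {a})

/-- The rank of `G` w.r.t. Δ-convexity. -/
noncomputable def rankDelta (G : SimpleGraph V) : ℕ :=
  sSup {n : ℕ | ∃ S : Set V, ConvIndep G S ∧ S.ncard = n}

/-- The independence number: maximum cardinality of a set of pairwise non-adjacent
vertices. -/
noncomputable def alphaNum (G : SimpleGraph V) : ℕ :=
  sSup {n : ℕ | ∃ S : Set V, S.Pairwise (fun a b => ¬ G.Adj a b) ∧ S.ncard = n}

/-- `G` is 2-connected: at least 3 vertices, connected, and deleting any single vertex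
leaves a connected graph. -/
def TwoConnected (G : SimpleGraph V) : Prop :=
  3 ≤ Nat.card V ∧ G.Connected ∧ ∀ v : V, (G.induce {u : V | u ≠ v}).Connected

/-- `G` is chordal: every cycle of length at least 4 has a chord, i.e. an edge of `G`
joining two vertices of the cycle that is not an edge of the cycle. -/
def ChordalGraph (G : SimpleGraph V) : Prop :=
  ∀ (v : V) (c : G.Walk v v), c.IsCycle → 4 ≤ c.length →
    ∃ x y : V, x ∈ c.support ∧ y ∈ c.support ∧ G.Adj x y ∧ s(x, y) ∉ c.edges

/-- `B` induces a connected subgraph of `G` with at least two vertices and no cut vertex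
(so: an edge, or a 2-connected subgraph). -/
def NoCutSet (G : SimpleGraph V) (B : Set V) : Prop :=
  2 ≤ B.ncard ∧ (G.induce B).Connected ∧ ∀ v ∈ B, (G.induce (B \ {v})).Connected

/-- `B` is (the vertex set of) a block of `G`: a maximal 2-connected subgraph, where a
bridge together with its endpoints also counts as a block. -/
def IsBlock (G : SimpleGraph V) (B : Set V) : Prop :=
  NoCutSet G B ∧ ∀ B' : Set V, NoCutSet G B' → B ⊆ B' → B = B'

/-- The set `B` induces a complete subgraph of `G`. -/
def CompleteOn (G : SimpleGraph V) (B : Set V) : Prop :=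
  ∀ u ∈ B, ∀ v ∈ B, u ≠ v → G.Adj u v


section HullBasics
variable {G : SimpleGraph V} {S T : Set V}

lemma subset_deltaHull : S ⊆ deltaHull G S := fun x hx T hT => hT.1 hx

lemma deltaConvex_deltaHull : DeltaConvex G (deltaHull G S) := by
  intro u v w hu hv huv hwu hwv T hT
  exact hT.2 (hu T hT) (hv T hT) huv hwu hwv

lemma deltaHull_min (h1 : S ⊆ T) (h2 : DeltaConvex G T) : deltaHull G S ⊆ T :=
  fun x hx => hx T ⟨h1, h2⟩

lemma DeltaConvex.of_pairwise (h : S.Pairwise fun a b => ¬ G.Adj a b) : DeltaConvex G S :=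
  fun u v _ hu hv huv _ _ => absurd huv (h hu hv huv.ne)

lemma deltaHull_of_pairwise (h : S.Pairwise fun a b => ¬ G.Adj a b) : deltaHull G S = S :=
  Set.Subset.antisymm (deltaHull_min Set.Subset.rfl (DeltaConvex.of_pairwise h)) subset_deltaHull

end HullBasics
section AuxRadon
open SimpleGraph Walk
variable {G : SimpleGraph V} {x y u s t : V}

section WalkLemmas
variable [DecidableEq V]

lemma dropUntil_start (W : G.Walk s t) (h : s ∈ W.support) : W.dropUntil s h = W := by
  cases W with
  | nil => simp [dropUntil]
  | cons r p => simp [dropUntil]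

lemma dropUntil_cons_ne {v v₁ : V} (r : G.Adj v v₁) (p : G.Walk v₁ t) (hv : ¬ v = x)
    (hx : x ∈ (Walk.cons r p).support) (hx' : x ∈ p.support) :
    (Walk.cons r p).dropUntil x hx = p.dropUntil x hx' := by
  simp [dropUntil, hv]

lemma mem_dropUntil_or {W : G.Walk s t} (hx : x ∈ W.support) (hy : y ∈ W.support) :
    y ∈ (W.dropUntil x hx).support ∨ x ∈ (W.dropUntil y hy).support := by
  induction W with
  | nil =>
    rw [mem_support_nil_iff] at hx hy
    subst hx; subst hy
    left; exact start_mem_support _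
  | @cons v v₁ t r p ih =>
    by_cases hv : v = x
    · subst hv; left; rw [dropUntil_start]; exact hy
    · by_cases hv' : v = y
      · subst hv'; right; rw [dropUntil_start]; exact hx
      · have hx' : x ∈ p.support := by
          rw [support_cons, List.mem_cons] at hx
          exact hx.resolve_left (fun h => hv h.symm)
        have hy' : y ∈ p.support := by
          rw [support_cons, List.mem_cons] at hy
          exact hy.resolve_left (fun h => hv' h.symm)
        rw [dropUntil_cons_ne r p hv hx hx', dropUntil_cons_ne r p hv' hy hy']
        exact ih hx' hy'

lemma takeUntil_inter {W : G.Walk s t} (hW : W.IsPath) (hu : u ∈ W.support)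
    (hxT : x ∈ (W.takeUntil u hu).support) (hxD : x ∈ (W.dropUntil u hu).support) : x = u := by
  by_contra hne
  have hsplit : W.support = (W.takeUntil u hu).support ++ (W.dropUntil u hu).support.tail := by
    conv_lhs => rw [← take_spec W hu]
    exact support_append _ _
  have hnd := hW.support_nodup
  rw [hsplit] at hnd
  have hdisj := List.disjoint_of_nodup_append hnd
  have : x ∈ (W.dropUntil u hu).support.tail := by
    have := support_eq_cons (W.dropUntil u hu)
    rw [this, List.mem_cons] at hxD
    exact hxD.resolve_left hne
  exact hdisj hxT this

lemma start_not_mem_dropUntil {W : G.Walk s t} (hW : W.IsPath) (hu : u ∈ W.support)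
    (hne : u ≠ s) : s ∉ (W.dropUntil u hu).support := fun h =>
  hne ((takeUntil_inter hW hu (start_mem_support _) h).symm)

lemma end_not_mem_takeUntil {W : G.Walk s t} (hW : W.IsPath) (hu : u ∈ W.support)
    (hne : u ≠ t) : t ∉ (W.takeUntil u hu).support := fun h =>
  hne ((takeUntil_inter hW hu h (end_mem_support _)).symm)

end WalkLemmas

lemma length_one_edges {W : G.Walk s t} (h : W.length = 1) : W.edges = [s(s, t)] := by
  cases W with
  | nil => simp at h
  | cons r p =>
    cases p with
    | nil => simp
    | cons r' p' => simp [Walk.length_cons] at h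

lemma path_loop_length {c : V} {p : G.Walk c c} (h : p.IsPath) : p.length = 0 := by
  cases p with
  | nil => rfl
  | cons r q =>
    rw [cons_isPath_iff] at h
    exact absurd (end_mem_support q) h.2

lemma tail_support_nodup {W : G.Walk s t} (hW : W.IsPath) : W.support.tail.Nodup := by
  have := hW.support_nodup
  rw [support_eq_cons W] at this
  exact this.of_cons

lemma start_not_mem_tail_support {W : G.Walk s t} (hW : W.IsPath) : s ∉ W.support.tail := by
  have := hW.support_nodup
  rw [support_eq_cons W] at this
  exact (List.nodup_cons.mp this).1

lemma isPath_append {W₁ : G.Walk s u} {W₂ : G.Walk u t} (h₁ : W₁.IsPath) (h₂ : W₂.IsPath)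
    (hd : ∀ z ∈ W₁.support, z ∈ W₂.support → z = u) : (W₁.append W₂).IsPath := by
  rw [isPath_def, support_append, List.nodup_append]
  refine ⟨h₁.support_nodup, tail_support_nodup h₂, ?_⟩
  intro z hz1 z₂ hz2 hzz; subst hzz
  have hz2' : z ∈ W₂.support := List.mem_of_mem_tail hz2
  have := hd z hz1 hz2'
  subst this
  exact start_not_mem_tail_support h₂ hz2

lemma edge_ends_not_mem {a b : V} {P : G.Walk a b} (hP : P.IsPath) (h2 : 2 ≤ P.length) :
    s(a, b) ∉ P.edges := by
  cases P with
  | nil => simp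
  | @cons _ w _ r p =>
    rw [cons_isPath_iff] at hP
    intro hmem
    rw [edges_cons, List.mem_cons] at hmem
    rcases hmem with hmem | hmem
    · rw [Sym2.eq_iff] at hmem
      rcases hmem with ⟨-, rfl⟩ | ⟨h1, -⟩
      · have := path_loop_length hP.1
        rw [length_cons] at h2
        omega
      · exact r.ne h1
    · exact hP.2 (p.fst_mem_support_of_mem_edges hmem)

lemma length_two_exists {a b : V} {P : G.Walk a b} (h : P.length = 2) :
    ∃ x, G.Adj a x ∧ G.Adj x b ∧ x ∈ P.support ∧ x ≠ a ∧ x ≠ b := by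
  cases P with
  | nil => simp at h
  | @cons _ w _ r p =>
    cases p with
    | nil => simp at h
    | @cons _ w' _ r' p' =>
      simp only [length_cons] at h
      have h0 : p'.length = 0 := by omega
      have hwb := eq_of_length_eq_zero h0
      subst hwb
      exact ⟨w, r, r', by simp [support_cons], fun hh => r.ne hh.symm, r'.ne⟩

section Shortcut
variable [DecidableEq V]

lemma shortcut_aux {W : G.Walk s t} (hW : W.IsPath) (hx : x ∈ W.support)
    (hadj : G.Adj x y) (he : s(x, y) ∉ W.edges)
    (hy : y ∈ (W.dropUntil x hx).support) :
    ∃ W' : G.Walk s t, W'.IsPath ∧ W'.length < W.length ∧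
      (∀ z ∈ W'.support, z ∈ W.support) ∧ (∀ e ∈ W'.edges, e = s(x, y) ∨ e ∈ W.edges) := by
  set T := W.takeUntil x hx with hT
  set D := W.dropUntil x hx with hD
  have hDpath : D.IsPath := hW.dropUntil hx
  set D2 := D.dropUntil y hy with hD2
  refine ⟨T.append (Walk.cons hadj D2), ?_, ?_, ?_, ?_⟩
  · refine isPath_append (hW.takeUntil hx) ?_ ?_
    · rw [cons_isPath_iff]
      refine ⟨hDpath.dropUntil hy, ?_⟩
      exact start_not_mem_dropUntil hDpath hy (fun h => hadj.ne h.symm)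
    · intro z hz1 hz2
      rw [support_cons, List.mem_cons] at hz2
      rcases hz2 with rfl | hz2
      · rfl
      · have hzD : z ∈ D.support := support_dropUntil_subset D hy hz2
        have := takeUntil_inter hW hx hz1 hzD
        subst this
        exact absurd hz2 (start_not_mem_dropUntil hDpath hy (fun h => hadj.ne h.symm))
  · have hWlen : W.length = T.length + D.length := by
      conv_lhs => rw [← take_spec W hx]
      exact length_append _ _
    have hDlen : D.length = (D.takeUntil y hy).length + D2.length := by
      conv_lhs => rw [← take_spec D hy]
      exact length_append _ _
    have h2 : 2 ≤ (D.takeUntil y hy).length := by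
      rcases Nat.lt_or_ge (D.takeUntil y hy).length 2 with h | h
      · interval_cases hl : (D.takeUntil y hy).length
        · exact absurd (eq_of_length_eq_zero hl) hadj.ne
        · exfalso
          have : s(x, y) ∈ (D.takeUntil y hy).edges := by rw [length_one_edges hl]; simp
          exact he (edges_dropUntil_subset W hx (edges_takeUntil_subset D hy this))
      · exact h
    rw [length_append, length_cons, hWlen, hDlen]
    omega
  · intro z hz
    rw [mem_support_append_iff] at hz
    rcases hz with hz | hz
    · exact support_takeUntil_subset W hx hz
    · rw [support_cons, List.mem_cons] at hz
      rcases hz with rfl | hz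
      · exact support_takeUntil_subset W hx (end_mem_support _)
      · exact support_dropUntil_subset W hx (support_dropUntil_subset D hy hz)
  · intro e heW
    rw [edges_append, List.mem_append, edges_cons, List.mem_cons] at heW
    rcases heW with h | h | h
    · exact Or.inr (edges_takeUntil_subset W hx h)
    · exact Or.inl h
    · exact Or.inr (edges_dropUntil_subset W hx (edges_dropUntil_subset D hy h))

lemma shortcut {W : G.Walk s t} (hW : W.IsPath) (hx : x ∈ W.support) (hy : y ∈ W.support)
    (hadj : G.Adj x y) (he : s(x, y) ∉ W.edges) :
    ∃ W' : G.Walk s t, W'.IsPath ∧ W'.length < W.length ∧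
      (∀ z ∈ W'.support, z ∈ W.support) ∧ (∀ e ∈ W'.edges, e = s(x, y) ∨ e ∈ W.edges) := by
  rcases mem_dropUntil_or hx hy with h | h
  · exact shortcut_aux hW hx hadj he h
  · obtain ⟨W', h1, h2, h3, h4⟩ := shortcut_aux hW hy hadj.symm (by rwa [Sym2.eq_swap]) h
    exact ⟨W', h1, h2, h3, fun e hh => by
      rcases h4 e hh with h' | h'
      · exact Or.inl (by rw [h', Sym2.eq_swap])
      · exact Or.inr h'⟩

end Shortcut

def AuxConfig (G : SimpleGraph V) (H : Set V) (n : ℕ) : Prop :=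
  ∃ (a b : V) (P : G.Walk a b) (Q : G.Walk b a), P.IsPath ∧ Q.IsPath ∧ a ∈ H ∧ b ∈ H ∧
    2 ≤ P.length ∧ (∀ w ∈ P.support, w ≠ a → w ≠ b → w ∉ H) ∧ (∀ w ∈ Q.support, w ∈ H) ∧
    P.length + Q.length = n

lemma aux_mixed [DecidableEq V] {H : Set V} {a b : V} {P : G.Walk a b} {Q : G.Walk b a}
    (hP : P.IsPath) (hQ : Q.IsPath) (haH : a ∈ H)
    (hPint : ∀ w ∈ P.support, w ≠ a → w ≠ b → w ∉ H) (hQH : ∀ w ∈ Q.support, w ∈ H)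
    (hadj : G.Adj x y) (hxP : x ∈ P.support) (hxQ : x ∉ Q.support)
    (hyQ : y ∈ Q.support) (hyP : y ∉ P.support) :
    ∃ m, m < P.length + Q.length ∧ AuxConfig G H m := by
  have hxa : x ≠ a := fun h => hxQ (h ▸ end_mem_support Q)
  have hxb : x ≠ b := fun h => hxQ (h ▸ start_mem_support Q)
  have hyb : y ≠ b := fun h => hyP (h ▸ end_mem_support P)
  set T := P.takeUntil x hxP with hT
  set P' := T.append (Walk.cons hadj Walk.nil) with hP'
  set Q' := Q.dropUntil y hyQ with hQ'
  have hPlen : P.length = T.length + (P.dropUntil x hxP).length := by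
    conv_lhs => rw [← take_spec P hxP]
    exact length_append _ _
  have hQlen : Q.length = (Q.takeUntil y hyQ).length + Q'.length := by
    conv_lhs => rw [← take_spec Q hyQ]
    exact length_append _ _
  have hT1 : 1 ≤ T.length := by
    rcases Nat.eq_zero_or_pos T.length with h | h
    · exact absurd (eq_of_length_eq_zero h).symm hxa
    · exact h
  have hD1 : 1 ≤ (P.dropUntil x hxP).length := by
    rcases Nat.eq_zero_or_pos (P.dropUntil x hxP).length with h | h
    · exact absurd (eq_of_length_eq_zero h) hxb
    · exact h
  have hTq1 : 1 ≤ (Q.takeUntil y hyQ).length := by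
    rcases Nat.eq_zero_or_pos (Q.takeUntil y hyQ).length with h | h
    · exact absurd (eq_of_length_eq_zero h).symm hyb
    · exact h
  have hP'len : P'.length = T.length + 1 := by
    rw [hP', length_append, length_cons, length_nil]
  have hP'path : P'.IsPath := by
    refine isPath_append (hP.takeUntil hxP) ?_ ?_
    · rw [cons_isPath_iff]
      exact ⟨IsPath.nil, by simp [hadj.ne]⟩
    · intro z hz1 hz2
      rw [support_cons, List.mem_cons] at hz2
      rcases hz2 with rfl | hz2
      · rfl
      · rw [support_nil, List.mem_singleton] at hz2
        subst hz2
        exact absurd (support_takeUntil_subset P hxP hz1) hyP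
  refine ⟨P'.length + Q'.length, by omega, a, y, P', Q', hP'path, hQ.dropUntil hyQ, haH,
    hQH y hyQ, by omega, ?_, ?_, rfl⟩
  · intro w hw hwa hwy
    rw [hP', mem_support_append_iff] at hw
    rcases hw with hw | hw
    · refine hPint w (support_takeUntil_subset P hxP hw) hwa ?_
      intro h; subst h
      exact end_not_mem_takeUntil hP hxP hxb hw
    · rw [support_cons, List.mem_cons] at hw
      rcases hw with rfl | hw
      · exact hPint w hxP hxa hxb
      · rw [support_nil, List.mem_singleton] at hw
        exact absurd hw hwy
  · intro w hw
    exact hQH w (support_dropUntil_subset Q hyQ hw)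

lemma aux_step (hch : ChordalGraph G) {H : Set V} (hconv : DeltaConvex G H) {n : ℕ}
    (hc : AuxConfig G H n) : ∃ m, m < n ∧ AuxConfig G H m := by
  classical
  obtain ⟨a, b, P, Q, hP, hQ, haH, hbH, hP2, hPint, hQH, hn⟩ := hc
  have hab : a ≠ b := by
    intro h; subst h
    have := path_loop_length hP; omega
  have hQ1 : 1 ≤ Q.length := by
    rcases Nat.eq_zero_or_pos Q.length with h | h
    · exact absurd (eq_of_length_eq_zero h) (Ne.symm hab)
    · exact h
  set C := P.append Q with hC
  have hClen : C.length = n := by rw [hC, length_append]; exact hn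
  have hPQ : ∀ z, z ∈ P.support → z ∈ Q.support → z = a ∨ z = b := by
    intro z hzP hzQ
    by_contra hcon; push_neg at hcon
    exact hPint z hzP hcon.1 hcon.2 (hQH z hzQ)
  have hCedges : C.edges = P.edges ++ Q.edges := edges_append _ _
  have hsab : s(a, b) ∉ P.edges := edge_ends_not_mem hP hP2
  have hdisjE : ∀ c d : V, s(c, d) ∈ P.edges → s(c, d) ∈ Q.edges → False := by
    intro c d hcP hcQ
    have hadj := P.adj_of_mem_edges hcP
    have hcPs := P.fst_mem_support_of_mem_edges hcP
    have hdPs := P.snd_mem_support_of_mem_edges hcP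
    have hcQs := Q.fst_mem_support_of_mem_edges hcQ
    have hdQs := Q.snd_mem_support_of_mem_edges hcQ
    rcases hPQ c hcPs hcQs with rfl | rfl <;> rcases hPQ d hdPs hdQs with rfl | rfl
    · exact hadj.ne rfl
    · exact hsab hcP
    · exact hsab (Sym2.eq_swap ▸ hcP)
    · exact hadj.ne rfl
  have hCtrail : C.IsTrail := by
    rw [isTrail_def, hCedges, List.nodup_append]
    refine ⟨hP.isTrail.edges_nodup, hQ.isTrail.edges_nodup, ?_⟩
    intro e heP e' heQ hee; subst hee
    induction e using Sym2.ind with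
    | _ c d => exact hdisjE c d heP heQ
  have hCne : C ≠ Walk.nil := by
    intro h
    rw [h] at hClen
    simp only [length_nil] at hClen
    omega
  have hCtail : C.support.tail.Nodup := by
    have hts : C.support.tail = P.support.tail ++ Q.support.tail := tail_support_append _ _
    rw [hts, List.nodup_append]
    refine ⟨tail_support_nodup hP, tail_support_nodup hQ, ?_⟩
    intro z hz1 z₂ hz2 hzz; subst hzz
    have hzP := List.mem_of_mem_tail hz1
    have hzQ := List.mem_of_mem_tail hz2
    rcases hPQ z hzP hzQ with rfl | rfl
    · exact start_not_mem_tail_support hP hz1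
    · exact start_not_mem_tail_support hQ hz2
  have hCcyc : C.IsCycle := by rw [isCycle_def]; exact ⟨hCtrail, hCne, hCtail⟩
  by_cases h4 : 4 ≤ n
  · obtain ⟨x, y, hxs, hys, hxy, hne⟩ := hch a C hCcyc (by omega)
    have hxs' : x ∈ P.support ∨ x ∈ Q.support := mem_support_append_iff P Q |>.mp hxs
    have hys' : y ∈ P.support ∨ y ∈ Q.support := mem_support_append_iff P Q |>.mp hys
    have hneP : s(x, y) ∉ P.edges := fun h => hne (by rw [hCedges]; exact List.mem_append.mpr (Or.inl h))
    have hneQ : s(x, y) ∉ Q.edges := fun h => hne (by rw [hCedges]; exact List.mem_append.mpr (Or.inr h))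
    have pbranch : x ∈ P.support → y ∈ P.support → ∃ m, m < n ∧ AuxConfig G H m := by
      intro hxP hyP
      obtain ⟨P', hP'path, hP'len, hP'supp, hP'edge⟩ := shortcut hP hxP hyP hxy hneP
      by_cases h2 : 2 ≤ P'.length
      · refine ⟨P'.length + Q.length, by omega, a, b, P', Q, hP'path, hQ, haH, hbH, h2,
          ?_, hQH, rfl⟩
        intro w hw hwa hwb
        exact hPint w (hP'supp w hw) hwa hwb
      · have h1 : P'.length = 1 := by
          have h0 : P'.length ≠ 0 := fun h => hab (eq_of_length_eq_zero h)
          omega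
        have hadjab : G.Adj a b := adj_of_length_eq_one h1
        have hE : s(a, b) ∈ P'.edges := by rw [length_one_edges h1]; simp
        have hxyab : s(x, y) = s(a, b) := by
          rcases hP'edge _ hE with h | h
          · exact h.symm
          · exact absurd h hsab
        have hQ2 : 2 ≤ Q.length := by
          rcases Nat.lt_or_ge Q.length 2 with h | h
          · have hQ1' : Q.length = 1 := by omega
            have hbaQ : s(b, a) ∈ Q.edges := by rw [length_one_edges hQ1']; simp
            exfalso
            apply hneQ
            rw [hxyab, Sym2.eq_swap]
            exact hbaQ
          · exact h
        refine ⟨P.length + 1, by omega, a, b, P, Walk.cons hadjab.symm Walk.nil, hP, ?_,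
          haH, hbH, hP2, hPint, ?_, by simp⟩
        · rw [cons_isPath_iff]
          exact ⟨IsPath.nil, by simp [Ne.symm hab]⟩
        · intro w hw
          rw [support_cons, support_nil, List.mem_cons, List.mem_singleton] at hw
          rcases hw with rfl | rfl
          · exact hbH
          · exact haH
    have qbranch : x ∈ Q.support → y ∈ Q.support → ∃ m, m < n ∧ AuxConfig G H m := by
      intro hxQ hyQ
      obtain ⟨Q', hQ'path, hQ'len, hQ'supp, _⟩ := shortcut hQ hxQ hyQ hxy hneQ
      refine ⟨P.length + Q'.length, by omega, a, b, P, Q', hP, hQ'path, haH, hbH, hP2,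
        hPint, ?_, rfl⟩
      intro w hw
      exact hQH w (hQ'supp w hw)
    by_cases hxP : x ∈ P.support
    · by_cases hyP : y ∈ P.support
      · exact pbranch hxP hyP
      · have hyQ : y ∈ Q.support := hys'.resolve_left hyP
        by_cases hxQ : x ∈ Q.support
        · exact qbranch hxQ hyQ
        · obtain ⟨m, hm, hcfg⟩ := aux_mixed hP hQ haH hPint hQH hxy hxP hxQ hyQ hyP
          exact ⟨m, by omega, hcfg⟩
    · have hxQ : x ∈ Q.support := hxs'.resolve_left hxP
      by_cases hyQ : y ∈ Q.support
      · exact qbranch hxQ hyQ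
      · have hyP : y ∈ P.support := hys'.resolve_right hyQ
        obtain ⟨m, hm, hcfg⟩ := aux_mixed hP hQ haH hPint hQH hxy.symm hyP hyQ hxQ hxP
        exact ⟨m, by omega, hcfg⟩
  · have hP2' : P.length = 2 := by omega
    have hQ1' : Q.length = 1 := by omega
    obtain ⟨w, hw1, hw2, hw3, hw4, hw5⟩ := length_two_exists hP2'
    have hba : G.Adj b a := adj_of_length_eq_one hQ1'
    have : w ∈ H := hconv haH hbH hba.symm hw1.symm hw2
    exact absurd this (hPint w hw3 hw4 hw5)

lemma aux_no_config (hch : ChordalGraph G) {H : Set V} (hconv : DeltaConvex G H) :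
    ∀ n, ¬ AuxConfig G H n := by
  intro n
  induction n using Nat.strong_induction_on with
  | _ n ih =>
    intro hc
    obtain ⟨m, hm, hcm⟩ := aux_step hch hconv hc
    exact ih m hm hcm

variable {H : Set V}


lemma walk_boundary {z c : V} (W : G.Walk z c) (hz : z ∉ H) (hc : c ∈ H) :
    ∃ x a, x ∉ H ∧ a ∈ H ∧ G.Adj x a := by
  induction W with
  | nil => exact absurd hc hz
  | @cons z z₁ c r p ih =>
    by_cases h1 : z₁ ∈ H
    · exact ⟨z, z₁, hz, h1, r⟩
    · exact ih h1 hc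

lemma walk_firstH {x c : V} (W : G.Walk x c) (hx : x ∉ H) (hc : c ∈ H) :
    ∃ (b : V) (W' : G.Walk x b), b ∈ H ∧ (∀ z ∈ W'.support, z ≠ b → z ∉ H) ∧
      (∀ z ∈ W'.support, z ∈ W.support) := by
  induction W with
  | nil => exact absurd hc hx
  | @cons x x₁ c r p ih =>
    by_cases h1 : x₁ ∈ H
    · refine ⟨x₁, Walk.cons r Walk.nil, h1, ?_, ?_⟩
      · intro z hz hzb
        rw [support_cons, support_nil, List.mem_cons, List.mem_singleton] at hz
        rcases hz with rfl | rfl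
        · exact hx
        · exact absurd rfl hzb
      · intro z hz
        rw [support_cons, support_nil, List.mem_cons, List.mem_singleton] at hz
        rw [support_cons, List.mem_cons]
        rcases hz with rfl | rfl
        · exact Or.inl rfl
        · exact Or.inr (start_mem_support p)
    · obtain ⟨b, W', hb, hint, hsub⟩ := ih h1 hc
      refine ⟨b, Walk.cons r W', hb, ?_, ?_⟩
      · intro z hz hzb
        rw [support_cons, List.mem_cons] at hz
        rcases hz with rfl | hz
        · exact hx
        · exact hint z hz hzb
      · intro z hz
        rw [support_cons, List.mem_cons] at hz
        rw [support_cons, List.mem_cons]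
        rcases hz with rfl | hz
        · exact Or.inl rfl
        · exact Or.inr (hsub z hz)

end AuxRadon

section HullEdge
open SimpleGraph Walk
variable {G : SimpleGraph V}

lemma hull_conn {u v : V} (huv : G.Adj u v) :
    ∀ w ∈ deltaHull G {u, v}, ∃ W : G.Walk w u, ∀ z ∈ W.support, z ∈ deltaHull G {u, v} := by
  set H := deltaHull G {u, v} with hH
  set T : Set V := {w | w ∈ H ∧ ∃ W : G.Walk w u, ∀ z ∈ W.support, z ∈ H} with hT
  have hsub : ({u, v} : Set V) ⊆ T := by
    rintro w (rfl | rfl)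
    · refine ⟨subset_deltaHull (Set.mem_insert _ _), Walk.nil, ?_⟩
      intro z hz
      rw [Walk.mem_support_nil_iff] at hz
      subst hz
      exact subset_deltaHull (Set.mem_insert _ _)
    · refine ⟨subset_deltaHull (Set.mem_insert_of_mem _ rfl), Walk.cons huv.symm Walk.nil, ?_⟩
      intro z hz
      rw [support_cons, support_nil, List.mem_cons, List.mem_singleton] at hz
      rcases hz with rfl | rfl
      · exact subset_deltaHull (Set.mem_insert_of_mem _ rfl)
      · exact subset_deltaHull (Set.mem_insert _ _)
  have hTconv : DeltaConvex G T := by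
    intro p q w hp hq hpq hwp hwq
    have hwH : w ∈ H := deltaConvex_deltaHull hp.1 hq.1 hpq hwp hwq
    obtain ⟨Wp, hWp⟩ := hp.2
    refine ⟨hwH, Walk.cons hwp Wp, ?_⟩
    intro z hz
    rw [support_cons, List.mem_cons] at hz
    rcases hz with rfl | hz
    · exact hwH
    · exact hWp z hz
  intro w hw
  exact (deltaHull_min hsub hTconv hw).2

lemma hull_edge_eq_univ (h2 : TwoConnected G) (hch : ChordalGraph G) {u v : V}
    (huv : G.Adj u v) : deltaHull G {u, v} = Set.univ := by
  classical
  set H := deltaHull G {u, v} with hH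
  by_contra hne
  have hu : u ∈ H := subset_deltaHull (Set.mem_insert _ _)
  have hv : v ∈ H := subset_deltaHull (Set.mem_insert_of_mem _ rfl)
  have hconv : DeltaConvex G H := deltaConvex_deltaHull
  obtain ⟨z, hz⟩ : ∃ z, z ∉ H := by
    by_contra hcon; push_neg at hcon
    exact hne (Set.eq_univ_of_forall hcon)
  obtain ⟨W0⟩ := h2.2.1.preconnected z u
  obtain ⟨x, a, hxH, haH, hxa⟩ := walk_boundary W0 hz hu
  obtain ⟨c, hcH, hca⟩ : ∃ c, c ∈ H ∧ c ≠ a := by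
    by_cases h : a = u
    · exact ⟨v, hv, fun hh => huv.ne (hh ▸ h).symm⟩
    · exact ⟨u, hu, fun hh => h hh.symm⟩
  have hxa' : x ≠ a := fun h => hxH (h ▸ haH)
  obtain ⟨W1, hW1⟩ : ∃ W : G.Walk x c, ∀ z' ∈ W.support, z' ≠ a := by
    obtain ⟨W₀⟩ := (h2.2.2 a).preconnected ⟨x, hxa'⟩ ⟨c, hca⟩
    refine ⟨W₀.map (SimpleGraph.Embedding.induce _).toHom, ?_⟩
    intro z' hz'
    have hz'' : z' ∈ W₀.support.map (SimpleGraph.Embedding.induce (G := G) {u : V | u ≠ a}).toHom := by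
      rw [← Walk.support_map]; exact hz'
    rw [List.mem_map] at hz''
    replace hz' := hz''
    obtain ⟨⟨w', hw'⟩, _, rfl⟩ := hz'
    exact hw'
  obtain ⟨b, W2, hbH, hint, hsubW⟩ := walk_firstH W1 hxH hcH
  set W3 := W2.bypass with hW3
  have hW3path : W3.IsPath := W2.bypass_isPath
  have hW3sub : ∀ z' ∈ W3.support, z' ∈ W2.support := fun z' hz' => W2.support_bypass_subset hz'
  have haW3 : a ∉ W3.support := fun h => hW1 a (hsubW a (hW3sub a h)) rfl
  set P := Walk.cons hxa.symm W3 with hPdef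
  have hPpath : P.IsPath := by rw [cons_isPath_iff]; exact ⟨hW3path, haW3⟩
  have hxb : x ≠ b := fun h => hxH (h ▸ hbH)
  have hP2 : 2 ≤ P.length := by
    rw [hPdef, length_cons]
    have : W3.length ≠ 0 := fun h => hxb (eq_of_length_eq_zero h)
    omega
  have hcn := hull_conn huv
  obtain ⟨Wb, hWb⟩ := hcn b hbH
  obtain ⟨Wa, hWa⟩ := hcn a haH
  set Q := (Wb.append Wa.reverse).bypass with hQdef
  have hQpath : Q.IsPath := bypass_isPath _
  have hQH : ∀ z' ∈ Q.support, z' ∈ H := by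
    intro z' hz'
    have hm := support_bypass_subset _ hz'
    rw [mem_support_append_iff] at hm
    rcases hm with h | h
    · exact hWb z' h
    · rw [support_reverse, List.mem_reverse] at h
      exact hWa z' h
  have hcfg : AuxConfig G H (P.length + Q.length) := by
    refine ⟨a, b, P, Q, hPpath, hQpath, haH, hbH, hP2, ?_, hQH, rfl⟩
    intro w hw hwa hwb
    rw [hPdef, support_cons, List.mem_cons] at hw
    rcases hw with rfl | hw
    · exact absurd rfl hwa
    · exact hint w (hW3sub w hw) hwb
  exact aux_no_config hch hconv _ hcfg

end HullEdge

/-- If `G` is a finite simple 2-connected chordal graph, then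
`r_Δ(G) = max {2, α(G)}`. -/
theorem stmt_13 {V : Type*} [Fintype V] (G : SimpleGraph V)
    (h2 : TwoConnected G) (hch : ChordalGraph G) :
    radonNumber G = max 2 (alphaNum G) := by
  classical
  have hbdd : ∀ p : Set V → Prop, BddAbove {n : ℕ | ∃ S : Set V, p S ∧ S.ncard = n} := by
    intro p
    refine ⟨Fintype.card V, ?_⟩
    rintro n ⟨S, -, rfl⟩
    have h := Set.ncard_le_ncard (Set.subset_univ S) Set.finite_univ
    simpa [Set.ncard_univ, Nat.card_eq_fintype_card] using h
  have hpairRadon : ∀ S : Set V, S.Pairwise (fun a b => ¬ G.Adj a b) → RadonIndep G S := by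
    rintro S hS ⟨S₁, S₂, hun, hdis, hne1, hne2, ⟨w, hw1, hw2⟩⟩
    have e1 : deltaHull G S₁ = S₁ :=
      deltaHull_of_pairwise (hS.mono (hun ▸ Set.subset_union_left))
    have e2 : deltaHull G S₂ = S₂ :=
      deltaHull_of_pairwise (hS.mono (hun ▸ Set.subset_union_right))
    rw [e1] at hw1; rw [e2] at hw2
    exact Set.disjoint_left.mp hdis hw1 hw2
  have hαr : alphaNum G ≤ radonNumber G := by
    apply csSup_le_csSup (hbdd _)
    · exact ⟨0, ∅, Set.pairwise_empty _, Set.ncard_empty _⟩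
    · rintro n ⟨S, hS, hc⟩
      exact ⟨S, hpairRadon S hS, hc⟩
  have h2r : 2 ≤ radonNumber G := by
    have hnt : Nontrivial V := by
      have := h2.1
      rw [Nat.card_eq_fintype_card] at this
      exact Fintype.one_lt_card_iff_nontrivial.mp (by omega)
    obtain ⟨a, b, hab⟩ := exists_pair_ne V
    apply le_csSup (hbdd _)
    refine ⟨{a, b}, ?_, Set.ncard_pair hab⟩
    rintro ⟨S₁, S₂, hun, hdis, ⟨p, hp⟩, ⟨q, hq⟩, ⟨w, hw1, hw2⟩⟩
    have hS1 : S₁ ⊆ {a, b} := hun ▸ Set.subset_union_left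
    have hS2 : S₂ ⊆ {a, b} := hun ▸ Set.subset_union_right
    have hq1 : q ∉ S₁ := fun h => Set.disjoint_left.mp hdis h hq
    have hp2 : p ∉ S₂ := fun h => Set.disjoint_left.mp hdis hp h
    have hns1 : ¬(a ∈ S₁ ∧ b ∈ S₁) := by
      rintro ⟨ha', hb'⟩
      rcases hS2 hq with rfl | rfl
      · exact hq1 ha'
      · exact hq1 hb'
    have hns2 : ¬(a ∈ S₂ ∧ b ∈ S₂) := by
      rintro ⟨ha', hb'⟩
      rcases hS1 hp with rfl | rfl
      · exact hp2 ha'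
      · exact hp2 hb'
    have hsub1 : S₁.Subsingleton := by
      intro s hs t ht
      rcases hS1 hs with rfl | rfl <;> rcases hS1 ht with rfl | rfl
      · rfl
      · exact absurd ⟨hs, ht⟩ hns1
      · exact absurd ⟨ht, hs⟩ hns1
      · rfl
    have hsub2 : S₂.Subsingleton := by
      intro s hs t ht
      rcases hS2 hs with rfl | rfl <;> rcases hS2 ht with rfl | rfl
      · rfl
      · exact absurd ⟨hs, ht⟩ hns2
      · exact absurd ⟨ht, hs⟩ hns2
      · rfl
    rw [deltaHull_of_pairwise (hsub1.pairwise _)] at hw1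
    rw [deltaHull_of_pairwise (hsub2.pairwise _)] at hw2
    exact Set.disjoint_left.mp hdis hw1 hw2
  have hemptyR : RadonIndep G (∅ : Set V) := by
    rintro ⟨S₁, S₂, hun, -, ⟨p, hp⟩, -, -⟩
    have : p ∈ (∅ : Set V) := hun ▸ Set.mem_union_left _ hp
    exact this
  have hupper : radonNumber G ≤ max 2 (alphaNum G) := by
    have h0 : (0 : ℕ) ∈ {n : ℕ | ∃ S : Set V, RadonIndep G S ∧ S.ncard = n} :=
      ⟨∅, hemptyR, Set.ncard_empty _⟩
    apply csSup_le ⟨0, h0⟩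
    rintro n ⟨S, hind, rfl⟩
    by_cases hn : S.ncard ≤ 2
    · exact le_max_of_le_left hn
    · push_neg at hn
      have hpair : S.Pairwise (fun a b => ¬ G.Adj a b) := by
        by_contra hcon
        rw [Set.Pairwise] at hcon; push_neg at hcon
        obtain ⟨p, hp, q, hq, hpq, hadj⟩ := hcon
        have hne2 : (S \ {p, q}).Nonempty := by
          rw [Set.nonempty_iff_ne_empty]
          intro hemp
          have hsub : S ⊆ {p, q} := Set.diff_eq_empty.mp hemp
          have hle := Set.ncard_le_ncard hsub (Set.toFinite _)
          have hpq2 : ({p, q} : Set V).ncard ≤ 2 :=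
            (Set.ncard_insert_le _ _).trans (by simp [Set.ncard_singleton])
          omega
        obtain ⟨w, hw⟩ := hne2
        apply hind
        refine ⟨{p, q}, S \ {p, q}, ?_, Set.disjoint_sdiff_right, ⟨p, Set.mem_insert _ _⟩,
          ⟨w, hw⟩, ⟨w, ?_, subset_deltaHull hw⟩⟩
        · exact Set.union_diff_cancel (by rintro z (rfl | rfl); exacts [hp, hq])
        · rw [hull_edge_eq_univ h2 hch hadj]
          trivial
      exact le_max_of_le_right (le_csSup (hbdd _) ⟨S, hpair, rfl⟩)
  exact le_antisymm hupper (max_le h2r hαr)
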